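/- Let G be a finite simple graph with vertex set V, let k ≥ 1 be an integer, and let V₁,…,V_k be independent sets of G of equal cardinality that partition V. Let a₁,…,a_k be k pairwise distinct new vertices not in V, let G̃ be the graph obtained from G by adding a₁,…,a_k as isolated vertices (the edges of G̃ are exactly the edges of G), and set Ṽᵢ := Vᵢ ∪ {aᵢ} for each i. Then there exists an independent set I of G with |I ∩ Vᵢ| = 1 for every i ∈ {1,…,k} if and only if there exists an independent set Ĩ of G̃ with |Ĩ ∩ Ṽᵢ| = 2 for every i ∈ {1,…,k}. -/

import Mathlib

/-- An independent set of a simple graph: no two of its vertices are adjacent. -/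
def IsIndep {α : Type*} (G : SimpleGraph α) (I : Finset α) : Prop :=
  ∀ u ∈ I, ∀ v ∈ I, ¬ G.Adj u v

/-- The graph `G̃` obtained from `G` by adding `k` new isolated vertices
`a₁, …, a_k` (modelled as the right summand `Fin k`): its edges are exactly
the edges of `G`. -/
def addIsolated {α : Type*} (G : SimpleGraph α) (k : ℕ) : SimpleGraph (α ⊕ Fin k) where
  Adj x y := ∃ u v, x = Sum.inl u ∧ y = Sum.inl v ∧ G.Adj u v
  symm := by
    constructor
    rintro x y ⟨u, v, rfl, rfl, h⟩
    exact ⟨v, u, rfl, rfl, G.symm.symm _ _ h⟩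
  loopless := by
    constructor
    rintro x ⟨u, v, rfl, h, hadj⟩
    cases Sum.inl.inj h
    exact G.loopless.irrefl u hadj

theorem reduction_PIS1_to_PIS2 {α : Type*} [Fintype α] [DecidableEq α]
    (G : SimpleGraph α) (k : ℕ) (hk : 1 ≤ k)
    (Vs : Fin k → Finset α)
    (hindep : ∀ i, IsIndep G (Vs i))
    (hcard : ∀ i j, (Vs i).card = (Vs j).card)
    (hpart : ∀ x : α, ∃! i, x ∈ Vs i) :
    (∃ I : Finset α, IsIndep G I ∧ ∀ i, (I ∩ Vs i).card = 1) ↔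
      (∃ J : Finset (α ⊕ Fin k), IsIndep (addIsolated G k) J ∧
        ∀ i, (J ∩ insert (Sum.inr i) ((Vs i).image Sum.inl)).card = 2) := by
  constructor
  · rintro ⟨I, hI, hI1⟩
    refine ⟨I.image Sum.inl ∪ Finset.univ.image Sum.inr, ?_, ?_⟩
    · rintro x hx y hy ⟨u, v, rfl, rfl, huv⟩
      simp only [Finset.mem_union, Finset.mem_image, Finset.mem_univ, true_and] at hx hy
      have hu : u ∈ I := by
        rcases hx with ⟨a, ha, hae⟩ | ⟨a, hae⟩
        · cases Sum.inl.inj hae; exact ha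
        · exact absurd hae (by simp)
      have hv : v ∈ I := by
        rcases hy with ⟨a, ha, hae⟩ | ⟨a, hae⟩
        · cases Sum.inl.inj hae; exact ha
        · exact absurd hae (by simp)
      exact hI u hu v hv huv
    · intro i
      have heq : (I.image Sum.inl ∪ Finset.univ.image Sum.inr) ∩
          insert (Sum.inr i) ((Vs i).image Sum.inl)
          = insert (Sum.inr i : α ⊕ Fin k) ((I ∩ Vs i).image (Sum.inl : α → α ⊕ Fin k)) := by
        ext x
        cases x with
        | inl v => simp
        | inr j => simp [eq_comm]
      rw [heq, Finset.card_insert_of_notMem (by simp),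
        Finset.card_image_of_injective _ Sum.inl_injective, hI1 i]
  · rintro ⟨J, hJ, hJ2⟩
    have hex : ∀ i, ∃ v, v ∈ Vs i ∧ Sum.inl v ∈ J := by
      intro i
      by_contra h
      push_neg at h
      have hsub : J ∩ insert (Sum.inr i) ((Vs i).image Sum.inl) ⊆ {Sum.inr i} := by
        intro x hx
        simp only [Finset.mem_inter, Finset.mem_insert, Finset.mem_image] at hx
        rcases hx.2 with rfl | ⟨v, hv, rfl⟩
        · simp
        · exact absurd hx.1 (h v hv)
      have := Finset.card_le_card hsub
      simp [hJ2 i] at this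
    choose f hf1 hf2 using hex
    refine ⟨Finset.univ.image f, ?_, ?_⟩
    · rintro u hu v hv huv
      simp only [Finset.mem_image, Finset.mem_univ, true_and] at hu hv
      obtain ⟨i, rfl⟩ := hu
      obtain ⟨j, rfl⟩ := hv
      exact hJ _ (hf2 i) _ (hf2 j) ⟨f i, f j, rfl, rfl, huv⟩
    · intro i
      have heq : Finset.univ.image f ∩ Vs i = {f i} := by
        ext x
        simp only [Finset.mem_inter, Finset.mem_image, Finset.mem_univ, true_and,
          Finset.mem_singleton]
        constructor
        · rintro ⟨⟨j, rfl⟩, hx⟩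
          obtain ⟨w, _, hw2⟩ := hpart (f j)
          rw [hw2 i hx, hw2 j (hf1 j)]
        · rintro rfl
          exact ⟨⟨i, rfl⟩, hf1 i⟩
      rw [heq, Finset.card_singleton]
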